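/- arXiv:1206.4258 — 2 statements merged into one kernel-verified Lean document; each statement's English description precedes it below -/
import Mathlib

section
/- Let r = q/p ∈ (0,1) be a rational number in lowest terms and let m = 2n ≥ 3 be an integer (n an integer or half-integer with n > 1). Let D be the subgroup of the group of bijections of ℚ ∪ {∞} generated by ρ and ρ', and C the subgroup generated by c. Then D is isomorphic to the infinite dihedral group, C is infinite cyclic, and Γ_{r,n} is the internal free product of D and C: the homomorphism from the free product D ∗ C to the group of bijections of ℚ ∪ {∞} induced by the inclusions of D and C is injective, with image Γ_{r,n}. -/
/-!
Common setup: 2-bridge link groups, Heckoid groups, the words `u_s`,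
Möbius transformations on `ℚ ∪ {∞}` (modelled as `Option ℚ`, with `none = ∞`),
the group `Γ_{r,n}`, continued fractions, and small–cancellation notions.
-/

/-- The free group `F` on the two generators `a`, `b`. -/
abbrev FG := FreeGroup (Fin 2)

namespace Heckoid

/-- The generator `a`. -/
def ga : FG := FreeGroup.of 0

/-- The generator `b`. -/
def gb : FG := FreeGroup.of 1

/-- `ε_i = (−1)^⌊ i q / p ⌋`, as an element `±1` of `ℤ`. -/
def epsSign (q : ℤ) (p : ℕ) (i : ℕ) : ℤ := (-1) ^ (Int.fdiv ((i : ℤ) * q) (p : ℤ)).natAbs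

/-- The letter at position `i`: `b` if `i` is odd, `a` if `i` is even. -/
def genAt (i : ℕ) : FG := if i % 2 = 1 then gb else ga

/-- `v = b^{ε₁} a^{ε₂} b^{ε₃} ⋯` (`p − 1` alternating letters). -/
def vWord (q : ℤ) (p : ℕ) : FG :=
  ((List.range (p - 1)).map fun i => genAt (i + 1) ^ epsSign q p (i + 1)).prod

/-- The word `u_s` associated with a rational number `s = q/p` in lowest terms:
`u_s = a v b^{(−1)^q} v⁻¹` if `p` is odd, and `u_s = a v a⁻¹ v⁻¹` if `p` is even. -/
def uWord (s : ℚ) : FG :=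
  if s.den % 2 = 1 then
    ga * vWord s.num s.den * gb ^ ((-1 : ℤ) ^ s.num.natAbs) * (vWord s.num s.den)⁻¹
  else
    ga * vWord s.num s.den * ga⁻¹ * (vWord s.num s.den)⁻¹

/-- The even Heckoid group `H(r;n) = ⟨a, b ∣ u_r^n⟩`. -/
abbrev HeckoidGroup (r : ℚ) (n : ℕ) := PresentedGroup ({uWord r ^ n} : Set FG)

/-- The natural projection `F → H(r;n)`. -/
def hMk (r : ℚ) (n : ℕ) : FG →* HeckoidGroup r n := PresentedGroup.mk _

/-- The 2-bridge link group `G(K(s)) = ⟨a, b ∣ u_s⟩`. -/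
abbrev TwoBridgeGroup (s : ℚ) := PresentedGroup ({uWord s} : Set FG)

/-- The natural projection `F → G(K(s))`. -/
def tMk (s : ℚ) : FG →* TwoBridgeGroup s := PresentedGroup.mk _

/-- An epimorphism `G(K(s)) → H(r;n)` is upper-meridian-pair-preserving if it is surjective and
the unordered pair of conjugacy classes of the images of `a`, `b` coincides with the unordered
pair of the conjugacy classes of `a`, `b` in `H(r;n)`. -/
def IsUMPP (s r : ℚ) (n : ℕ) (φ : TwoBridgeGroup s →* HeckoidGroup r n) : Prop :=
  Function.Surjective φ ∧
    ((IsConj (φ (tMk s ga)) (hMk r n ga) ∧ IsConj (φ (tMk s gb)) (hMk r n gb)) ∨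
     (IsConj (φ (tMk s ga)) (hMk r n gb) ∧ IsConj (φ (tMk s gb)) (hMk r n ga)))

/-! ### Möbius transformations of `ℚ ∪ {∞}` -/

/-- The Möbius transformation of the matrix `[[A,B],[C,D]]` as a function on
`ℚ ∪ {∞} = Option ℚ` (`none` is `∞`). -/
def mfun (A B C D : ℚ) : Option ℚ → Option ℚ
  | none => if C = 0 then none else some (A / C)
  | some x => if C * x + D = 0 then none else some ((A * x + B) / (C * x + D))

theorem mfun_leftInv (A B C D : ℚ) (h : A * D - B * C ≠ 0) :
    Function.LeftInverse (mfun D (-B) (-C) A) (mfun A B C D) := by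
  intro x
  cases x with
  | none =>
    by_cases hC : C = 0
    · simp [mfun, hC]
    · have h1 : -C * (A / C) + A = 0 := by field_simp; ring
      simp only [mfun, if_neg hC, if_pos h1]
  | some x =>
    by_cases hx : C * x + D = 0
    · have hC : C ≠ 0 := by
        rintro rfl
        simp only [zero_mul, zero_add] at hx
        rw [hx] at h
        simp at h
      simp only [mfun, if_pos hx]
      have h2 : ¬(-C = 0) := by simpa using hC
      simp only [mfun, if_neg h2]
      congr 1
      field_simp
      linarith
    · have key : -C * ((A * x + B) / (C * x + D)) + A = (A * D - B * C) / (C * x + D) := by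
        field_simp
        ring
      have hne : ¬(-C * ((A * x + B) / (C * x + D)) + A = 0) := by
        rw [key]
        exact div_ne_zero h hx
      simp only [mfun, if_neg hx, if_neg hne]
      congr 1
      have e1 : D * ((A * x + B) / (C * x + D)) + -B = ((A * D - B * C) * x) / (C * x + D) := by
        rw [mul_div_assoc', div_add' _ _ _ hx]
        ring
      rw [e1, key, div_eq_iff (div_ne_zero h hx)]
      field_simp

/-- The Möbius transformation of an invertible matrix `[[A,B],[C,D]]`, as a bijection of
`ℚ ∪ {∞}`. -/
def moebius (A B C D : ℚ) (h : A * D - B * C ≠ 0) : Equiv.Perm (Option ℚ) where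
  toFun := mfun A B C D
  invFun := mfun D (-B) (-C) A
  left_inv := mfun_leftInv A B C D h
  right_inv := fun x => by
    have h' : D * A - -B * -C ≠ 0 := fun hc => h (by linear_combination hc)
    have := mfun_leftInv D (-B) (-C) A h' x
    simpa using this

/-- `ρ(s) = −s`. -/
def rhoPerm : Equiv.Perm (Option ℚ) := moebius (-1) 0 0 1 (by norm_num)

/-- `ρ'(s) = 2 − s`. -/
def rhoPerm' : Equiv.Perm (Option ℚ) := moebius (-1) 2 0 1 (by norm_num)

/-- The parabolic Möbius transformation centered at `r = q/p`, translating by `m` units: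
the Möbius transformation of `[[1+mpq, −mq²],[mp², 1−mpq]]`. -/
def cPerm (r : ℚ) (m : ℤ) : Equiv.Perm (Option ℚ) :=
  moebius (1 + (m : ℚ) * r.den * r.num) (-((m : ℚ) * r.num ^ 2)) ((m : ℚ) * r.den ^ 2)
    (1 - (m : ℚ) * r.den * r.num) (ne_of_eq_of_ne (by ring) one_ne_zero)

/-- The group `Γ_{r,n}` (`m = 2n`): the subgroup of the bijections of `ℚ ∪ {∞}` generated by
`ρ`, `ρ'` and the parabolic `c`. -/
def Gamma (r : ℚ) (m : ℤ) : Subgroup (Equiv.Perm (Option ℚ)) :=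
  Subgroup.closure {rhoPerm, rhoPerm', cPerm r m}

/-- `y` is in the `Γ_{r,n}`-orbit of `x` (where `m = 2n`). -/
def orbitRel (r : ℚ) (m : ℤ) (x y : Option ℚ) : Prop :=
  ∃ g ∈ Gamma r m, g x = y

/-! ### Continued fractions -/

/-- The matrix `[[0,1],[1,b₁]] ⋯ [[0,1],[1,b_l]]` of a continued fraction. -/
def cfMat : List ℤ → Matrix (Fin 2) (Fin 2) ℤ
  | [] => 1
  | b :: L => !![0, 1; 1, b] * cfMat L

/-- The value in `ℚ ∪ {∞}` of the continued fraction
`[b₁, …, b_l] = 1/(b₁ + 1/(b₂ + ⋯ + 1/b_l))`: the image of `0` under the Möbius transformation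
of `cfMat`. -/
def cfValue (L : List ℤ) : Option ℚ :=
  mfun ((cfMat L 0 0 : ℤ) : ℚ) ((cfMat L 0 1 : ℤ) : ℚ) ((cfMat L 1 0 : ℤ) : ℚ)
    ((cfMat L 1 1 : ℤ) : ℚ) (some 0)

/-! ### Small cancellation notions -/

/-- The symmetrized set `R` generated by `u_r^n`: all cyclic permutations of the reduced words
of `u_r^n` and of `u_r^{−n}`. -/
def SymmSet (r : ℚ) (n : ℕ) : Set FG :=
  {w | (∃ k, w.toWord = (uWord r ^ n).toWord.rotate k) ∨
       (∃ k, w.toWord = ((uWord r ^ n)⁻¹).toWord.rotate k)}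

/-- A piece relative to `R`: a nonempty word which is a common initial segment of two distinct
elements of `R`. -/
def IsPiece (r : ℚ) (n : ℕ) (w : FG) : Prop :=
  w ≠ 1 ∧ ∃ x ∈ SymmSet r n, ∃ y ∈ SymmSet r n, x ≠ y ∧
    w.toWord <+: x.toWord ∧ w.toWord <+: y.toWord

/-- `w` is a product of `k` pieces: a concatenation, without cancellation, of `k` pieces. -/
def IsProductOfPieces (r : ℚ) (n : ℕ) (k : ℕ) (w : FG) : Prop :=
  ∃ ws : List FG, ws.length = k ∧ (∀ v ∈ ws, IsPiece r n v) ∧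
    w.toWord = (ws.map FreeGroup.toWord).flatten

/-- The product `x * y` is reduced without cancellation. -/
def NoCancel (x y : FG) : Prop := (x * y).toWord = x.toWord ++ y.toWord

/-- Small cancellation condition `C(p)`: no element of `R` is a product of fewer than `p`
pieces. -/
def SatisfiesC (r : ℚ) (n : ℕ) (p : ℕ) : Prop :=
  ∀ w ∈ SymmSet r n, ∀ k < p, ¬ IsProductOfPieces r n k w

/-- Small cancellation condition `T(4)`. -/
def SatisfiesT4 (r : ℚ) (n : ℕ) : Prop :=
  ∀ r₁ ∈ SymmSet r n, ∀ r₂ ∈ SymmSet r n, ∀ r₃ ∈ SymmSet r n,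
    r₂ ≠ r₁⁻¹ → r₃ ≠ r₂⁻¹ → r₁ ≠ r₃⁻¹ →
    NoCancel r₁ r₂ ∨ NoCancel r₂ r₃ ∨ NoCancel r₃ r₁

/-- `w` is a subword of the cyclic word `(u)`: an initial segment of some cyclic permutation
of the reduced word of `u`. -/
def IsCyclicSubword (w u : FG) : Prop := ∃ k, w.toWord <+: u.toWord.rotate k

end Heckoid

namespace Heckoid

theorem mfun_comp (A B C D A' B' C' D' : ℚ) (h : A * D - B * C ≠ 0)
    (h' : A' * D' - B' * C' ≠ 0) (x : Option ℚ) :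
    mfun A B C D (mfun A' B' C' D' x) =
      mfun (A * A' + B * C') (A * B' + B * D') (C * A' + D * C') (C * B' + D * D') x := by
  cases x with
  | none =>
    by_cases hC' : C' = 0
    · have hA' : A' ≠ 0 := by
        intro hA'; apply h'; rw [hA', hC']; ring
      simp only [mfun, hC', if_pos rfl, if_true, mul_zero, add_zero]
      by_cases hC : C = 0
      · simp [mfun, hC]
      · have : C * A' ≠ 0 := mul_ne_zero hC hA'
        simp only [mfun, if_neg hC, if_neg this]
        congr 1
        field_simp
        all_goals ring
    · simp only [mfun, if_neg hC']
      have key : C * (A' / C') + D = (C * A' + D * C') / C' := by field_simp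
      by_cases h2 : C * A' + D * C' = 0
      · simp only [mfun, key, h2, zero_div]
        simp
      · have : C * (A' / C') + D ≠ 0 := by rw [key]; exact div_ne_zero h2 hC'
        simp only [mfun, if_neg this, if_neg h2]
        congr 1
        rw [key]
        rw [div_eq_div_iff (by rw [← key]; exact this) h2]
        field_simp
        all_goals ring
  | some x =>
    by_cases hx : C' * x + D' = 0
    · have hnum : A' * x + B' ≠ 0 := by
        intro hn
        apply h'
        have hD' : D' = -(C' * x) := by linarith
        have hB' : B' = -(A' * x) := by linarith
        rw [hD', hB']; ring
      have key : C * (A' * x + B') + D * (C' * x + D') = (C * A' + D * C') * x + (C * B' + D * D') := by ring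
      have key2 : (C * A' + D * C') * x + (C * B' + D * D') = C * (A' * x + B') := by
        rw [← key, hx]; ring
      simp only [mfun, if_pos hx]
      by_cases hC : C = 0
      · have h0 : D * C' * x + D * D' = 0 := by linear_combination D * hx
        simp [mfun, hC, h0]
      · have h2 : (C * A' + D * C') * x + (C * B' + D * D') ≠ 0 := by
          rw [key2]; exact mul_ne_zero hC hnum
        simp only [mfun, if_neg hC, if_neg h2]
        congr 1
        rw [div_eq_div_iff hC h2, key2]
        linear_combination (-(C * B)) * hx
    · simp only [mfun, if_neg hx]
      have key : C * ((A' * x + B') / (C' * x + D')) + D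
          = ((C * A' + D * C') * x + (C * B' + D * D')) / (C' * x + D') := by
        rw [mul_div_assoc', div_add' _ _ _ hx]; ring
      by_cases h2 : (C * A' + D * C') * x + (C * B' + D * D') = 0
      · simp only [mfun, key, h2, zero_div]
        simp
      · have h3 : C * ((A' * x + B') / (C' * x + D')) + D ≠ 0 := by
          rw [key]; exact div_ne_zero h2 hx
        simp only [mfun, if_neg h3, if_neg h2]
        congr 1
        have keyN : A * ((A' * x + B') / (C' * x + D')) + B
            = ((A * A' + B * C') * x + (A * B' + B * D')) / (C' * x + D') := by
          rw [mul_div_assoc', div_add' _ _ _ hx]; ring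
        rw [keyN, key, div_div_div_cancel_right₀ hx]

theorem moebius_apply (A B C D : ℚ) (h : A * D - B * C ≠ 0) (x : Option ℚ) :
    moebius A B C D h x = mfun A B C D x := rfl

theorem moebius_mul (A B C D A' B' C' D' : ℚ) (h : A * D - B * C ≠ 0)
    (h' : A' * D' - B' * C' ≠ 0) :
    moebius A B C D h * moebius A' B' C' D' h' =
      moebius (A * A' + B * C') (A * B' + B * D') (C * A' + D * C') (C * B' + D * D')
        (by
          have : (A * A' + B * C') * (C * B' + D * D') - (A * B' + B * D') * (C * A' + D * C')
              = (A * D - B * C) * (A' * D' - B' * C') := by ring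
          rw [this]; exact mul_ne_zero h h') := by
  apply Equiv.ext
  intro x
  exact mfun_comp A B C D A' B' C' D' h h' x

theorem moebius_congr {A B C D A' B' C' D' : ℚ} (h : A * D - B * C ≠ 0)
    (hA : A = A') (hB : B = B') (hC : C = C') (hD : D = D') :
    moebius A B C D h = moebius A' B' C' D' (by rw [← hA, ← hB, ← hC, ← hD]; exact h) := by
  subst hA; subst hB; subst hC; subst hD; rfl

theorem moebius_inv (A B C D : ℚ) (h : A * D - B * C ≠ 0) :
    (moebius A B C D h)⁻¹ =
      moebius D (-B) (-C) A (by intro hc; apply h; linear_combination hc) := by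
  apply Equiv.ext
  intro x
  rfl

theorem moebius_neg (A B C D : ℚ) (h : A * D - B * C ≠ 0) :
    moebius (-A) (-B) (-C) (-D) (by intro hc; apply h; linear_combination hc) =
      moebius A B C D h := by
  apply Equiv.ext
  intro x
  rw [moebius_apply, moebius_apply]
  cases x with
  | none =>
    simp only [mfun, neg_eq_zero, neg_div_neg_eq]
  | some x =>
    have e1 : -C * x + -D = -(C * x + D) := by ring
    have e2 : -A * x + -B = -(A * x + B) := by ring
    simp only [mfun, e1, e2, neg_eq_zero, neg_div_neg_eq]

theorem moebius_one :
    moebius 1 0 0 1 (by norm_num) = 1 := by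
  apply Equiv.ext
  intro x
  rw [moebius_apply]
  cases x <;> simp [mfun]

/-- Translation by `a`. -/
def transPerm (a : ℚ) : Equiv.Perm (Option ℚ) := moebius 1 a 0 1 (by norm_num)

theorem transPerm_zero : transPerm 0 = 1 := moebius_one

theorem transPerm_add (a b : ℚ) : transPerm a * transPerm b = transPerm (a + b) := by
  rw [transPerm, transPerm, moebius_mul]
  exact moebius_congr _ (by ring) (by ring) (by ring) (by ring)

/-- Translations as a homomorphism from `Multiplicative ℚ`. -/
def transHom : Multiplicative ℚ →* Equiv.Perm (Option ℚ) where
  toFun a := transPerm a.toAdd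
  map_one' := transPerm_zero
  map_mul' a b := (transPerm_add _ _).symm

theorem transPerm_zpow (a : ℚ) (k : ℤ) : (transPerm a) ^ k = transPerm (k * a) := by
  have h1 : transPerm a = transHom (Multiplicative.ofAdd a) := rfl
  rw [h1, ← map_zpow, ← ofAdd_zsmul]
  show transPerm _ = _
  rw [zsmul_eq_mul]
  push_cast
  rfl
/-- The affine permutations `s ↦ ±s + 2k`. -/
def aff (b : Bool) (k : ℤ) : Equiv.Perm (Option ℚ) :=
  moebius (if b then 1 else -1) (2 * k) 0 1 (by cases b <;> norm_num)

theorem aff_rho : rhoPerm = aff false 0 := by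
  rw [rhoPerm, aff]
  exact moebius_congr _ (by norm_num) (by norm_num) rfl rfl

theorem aff_rho' : rhoPerm' = aff false 1 := by
  rw [rhoPerm', aff]
  exact moebius_congr _ (by norm_num) (by norm_num) rfl rfl

theorem aff_one : aff true 0 = 1 := by
  rw [aff]
  rw [moebius_congr _ (by norm_num : ((if (true : Bool) then 1 else -1 : ℚ)) = 1)
    (by norm_num : ((2 : ℚ) * (0 : ℤ)) = 0) rfl rfl]
  exact moebius_one

theorem aff_mul (b b' : Bool) (k k' : ℤ) :
    aff b k * aff b' k' = aff (b == b') ((if b then k' else -k') + k) := by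
  rw [aff, aff, aff, moebius_mul]
  cases b <;> cases b' <;>
    exact moebius_congr _ (by norm_num) (by simp; push_cast; ring) (by norm_num) (by norm_num)

theorem aff_inv (b : Bool) (k : ℤ) :
    (aff b k)⁻¹ = aff b (if b then -k else k) := by
  rw [aff, moebius_inv]
  cases b
  · rw [show (if (false : Bool) then -k else k) = k from rfl]
    rw [aff]
    rw [← moebius_neg]
    exact moebius_congr _ (by norm_num) (by push_cast; ring) (by norm_num) (by norm_num)
  · rw [show (if (true : Bool) then -k else k) = -k from rfl]
    rw [aff]
    exact moebius_congr _ (by norm_num) (by push_cast; ring) (by norm_num) (by norm_num)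

theorem mem_D_form {g : Equiv.Perm (Option ℚ)}
    (hg : g ∈ Subgroup.closure {rhoPerm, rhoPerm'}) : ∃ b k, g = aff b k := by
  induction hg using Subgroup.closure_induction with
  | mem x hx =>
    rcases hx with rfl | rfl
    · exact ⟨false, 0, aff_rho⟩
    · exact ⟨false, 1, aff_rho'⟩
  | one => exact ⟨true, 0, aff_one.symm⟩
  | mul x y _ _ hx hy =>
    obtain ⟨b, k, rfl⟩ := hx
    obtain ⟨b', k', rfl⟩ := hy
    exact ⟨_, _, aff_mul b b' k k'⟩
  | inv x _ hx =>
    obtain ⟨b, k, rfl⟩ := hx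
    exact ⟨_, _, aff_inv b k⟩

theorem aff_mem_D (b : Bool) (k : ℤ) : aff b k ∈ Subgroup.closure {rhoPerm, rhoPerm'} := by
  have hρ : rhoPerm ∈ Subgroup.closure {rhoPerm, rhoPerm'} :=
    Subgroup.subset_closure (by simp)
  have hρ' : rhoPerm' ∈ Subgroup.closure {rhoPerm, rhoPerm'} :=
    Subgroup.subset_closure (by simp)
  have hτ : ∀ j : ℤ, aff true j ∈ Subgroup.closure {rhoPerm, rhoPerm'} := by
    intro j
    have h2 : aff true 1 = rhoPerm' * rhoPerm := by
      rw [aff_rho, aff_rho', aff_mul]; rfl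
    have h3 : aff true j = (aff true 1) ^ j := by
      induction j using Int.induction_on with
      | zero => rw [zpow_zero, aff_one]
      | succ n ih =>
        rw [zpow_add_one, ← ih, aff_mul]
        norm_num
        rw [add_comm]
      | pred n ih =>
        have hinv : (aff true 1)⁻¹ = aff true (-1) := by rw [aff_inv]; norm_num
        rw [zpow_sub_one, ← ih, hinv, aff_mul]
        norm_num
        congr 1
        ring
    rw [h3, h2]
    exact zpow_mem (mul_mem hρ' hρ) j
  cases b
  · have : aff false k = aff true k * aff false 0 := by rw [aff_mul]; norm_num
    rw [this, ← aff_rho]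
    exact mul_mem (hτ k) hρ
  · exact hτ k

theorem aff_apply (b : Bool) (k : ℤ) (s : ℚ) :
    aff b k (some s) = some ((if b then 1 else -1) * s + 2 * k) := by
  rw [aff, moebius_apply, mfun]
  norm_num
/-- The coordinate change `s ↦ 1/(s - r)`. -/
def TPerm (r : ℚ) : Equiv.Perm (Option ℚ) := moebius 0 1 1 (-r) (by norm_num)

theorem cPerm_conj (r : ℚ) :
    ∀ m : ℤ, cPerm r m
      = (TPerm r)⁻¹ * transPerm ((m : ℚ) * (r.den : ℚ) ^ 2) * TPerm r := by
  intro m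
  have hp : (r.den : ℚ) ≠ 0 := by positivity
  have hq : (r.num : ℚ) = r * (r.den : ℚ) := by
    rw [Rat.mul_den_eq_num]
  rw [TPerm, transPerm, moebius_inv, moebius_mul, moebius_mul, cPerm]
  conv_lhs => rw [← moebius_neg]
  refine moebius_congr _ ?_ ?_ ?_ ?_ <;> (try simp only [hq]) <;> push_cast <;> ring

theorem cPerm_zpow (r : ℚ) (m k : ℤ) :
    (cPerm r m) ^ k
      = (TPerm r)⁻¹ * transPerm ((k : ℚ) * ((m : ℚ) * (r.den : ℚ) ^ 2)) * TPerm r := by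
  have h1 : cPerm r m = (MulAut.conj (TPerm r)⁻¹) (transPerm ((m : ℚ) * (r.den : ℚ) ^ 2)) := by
    rw [MulAut.conj_apply, inv_inv, cPerm_conj]
  rw [h1, ← map_zpow, transPerm_zpow, MulAut.conj_apply, inv_inv]

/-- Radius of the ping-pong disc around `r`. -/
def delta (r : ℚ) : ℚ := min r (1 - r)

theorem delta_pos {r : ℚ} (hr0 : 0 < r) (hr1 : r < 1) : 0 < delta r := by
  rw [delta]; simp [hr0]; linarith

theorem two_le_den {r : ℚ} (hr0 : 0 < r) (hr1 : r < 1) : 2 ≤ (r.den : ℚ) := by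
  have h1 : r.den ≠ 1 := by
    intro h
    have h2 : (r.num : ℚ) = r := by
      rw [← Rat.num_div_den r, h]; simp
    have h3 : 1 ≤ r.num := by
      have := (Rat.num_pos).mpr hr0
      omega
    have h4 : (1 : ℚ) ≤ (r.num : ℚ) := by exact_mod_cast h3
    rw [h2] at h4
    linarith
  have h2 : 2 ≤ r.den := by
    have := r.pos
    omega
  exact_mod_cast h2

theorem inv_den_le_delta {r : ℚ} (hr0 : 0 < r) (hr1 : r < 1) :
    1 / (r.den : ℚ) ≤ delta r := by
  have hp : (0 : ℚ) < (r.den : ℚ) := by positivity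
  have hq : (r.num : ℚ) = r * (r.den : ℚ) := by
    rw [Rat.mul_den_eq_num]
  have hn1 : (1 : ℚ) ≤ (r.num : ℚ) := by
    have := (Rat.num_pos).mpr hr0
    exact_mod_cast this
  have hnd : (r.num : ℚ) + 1 ≤ (r.den : ℚ) := by
    have h5 : (r.num : ℚ) < (r.den : ℚ) := by nlinarith
    have h6 : r.num < (r.den : ℤ) := by exact_mod_cast h5
    have h7 : r.num + 1 ≤ (r.den : ℤ) := by omega
    exact_mod_cast h7
  have h1 : 1 / (r.den : ℚ) ≤ r := by
    rw [div_le_iff₀ hp]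
    nlinarith
  have h2 : 1 / (r.den : ℚ) ≤ 1 - r := by
    rw [div_le_iff₀ hp]
    nlinarith
  exact le_min h1 h2

theorem delta_le_half {r : ℚ} (hr0 : 0 < r) (hr1 : r < 1) : delta r ≤ 1 / 2 := by
  rw [delta]
  rcases le_total r (1/2) with h | h
  · exact le_trans (min_le_left _ _) h
  · refine le_trans (min_le_right _ _) (by linarith)
theorem cpow_maps {r : ℚ} (hr0 : 0 < r) (hr1 : r < 1) {m : ℤ} (hm : 3 ≤ m) {k : ℤ}
    (hk : k ≠ 0) (x : Option ℚ) (hx : x = none ∨ ∃ s, x = some s ∧ delta r ≤ |s - r|) :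
    ∃ y, ((cPerm r m) ^ k) x = some y ∧ |y - r| < delta r := by
  have hp : (0 : ℚ) < (r.den : ℚ) := by positivity
  have hp2 : (2 : ℚ) ≤ (r.den : ℚ) := two_le_den hr0 hr1
  have hδ0 : 0 < delta r := delta_pos hr0 hr1
  have hδp : 1 / (r.den : ℚ) ≤ delta r := inv_den_le_delta hr0 hr1
  set p : ℚ := (r.den : ℚ) with hpdef
  set a : ℚ := (k : ℚ) * ((m : ℚ) * p ^ 2) with ha
  have hm3 : (3 : ℚ) ≤ (m : ℚ) := by exact_mod_cast hm
  have hk1 : (1 : ℚ) ≤ |(k : ℚ)| := by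
    have : 1 ≤ |k| := Int.one_le_abs hk
    calc (1 : ℚ) ≤ (|k| : ℤ) := by exact_mod_cast this
    _ = |(k : ℚ)| := by push_cast; rfl
  have haabs : 3 * p ^ 2 ≤ |a| := by
    rw [ha, abs_mul]
    have h2 : |(m : ℚ) * p ^ 2| = (m : ℚ) * p ^ 2 := abs_of_nonneg (by positivity)
    rw [h2]
    have hmp : (0 : ℚ) ≤ (m : ℚ) * p ^ 2 := by positivity
    calc 3 * p ^ 2 ≤ (m : ℚ) * p ^ 2 := by nlinarith
      _ = 1 * ((m : ℚ) * p ^ 2) := by ring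
      _ ≤ |(k : ℚ)| * ((m : ℚ) * p ^ 2) := mul_le_mul_of_nonneg_right hk1 hmp
  have hane : a ≠ 0 := by
    intro h0
    rw [h0] at haabs
    simp at haabs
    nlinarith
  have hrec : ∀ w : ℚ, |w| ≤ p → ∃ y, (TPerm r)⁻¹ (some (w + a)) = some y ∧ |y - r| < delta r := by
    intro w hw
    have hwa : w + a ≠ 0 := by
      intro h0
      have : |w| = |a| := by rw [show w = -a by linarith, abs_neg]
      nlinarith
    have hcond : -1 * (w + a) + 0 ≠ 0 := by intro h0; apply hwa; linarith
    refine ⟨(-r * (w + a) + -1) / (-1 * (w + a) + 0), ?_, ?_⟩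
    · rw [TPerm, moebius_inv, moebius_apply, mfun, if_neg hcond]
    · have key : ∀ u : ℚ, u ≠ 0 → (-r * u + -1) / (-1 * u + 0) - r = 1 / u := by
        intro u hu
        have h8 : (-r * u + -1) / (-1 * u + 0) = (r * u + 1) / u := by
          rw [div_eq_div_iff (by intro h0; apply hu; linarith) hu]
          ring
        rw [h8, eq_div_iff hu, sub_mul, div_mul_cancel₀ _ hu]
        ring
      have hy := key (w + a) hwa
      rw [hy]
      have h1 : |w + a| ≥ |a| - |w| := by
        have := abs_sub_abs_le_abs_sub (a) (-(w)) -- |a| - |w| ≤ |a + w|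
        rw [abs_neg, sub_neg_eq_add] at this
        calc |a| - |w| ≤ |a + w| := this
        _ = |w + a| := by rw [add_comm]
      have h2 : 3 * p ^ 2 - p ≤ |w + a| := by nlinarith
      have h3 : 0 < 3 * p ^ 2 - p := by nlinarith
      have h4 : |1 / (w + a)| = 1 / |w + a| := by rw [abs_div, abs_one]
      rw [h4]
      have h5 : 1 / |w + a| ≤ 1 / (3 * p ^ 2 - p) := by
        apply one_div_le_one_div_of_le h3 h2
      have h6 : 1 / (3 * p ^ 2 - p) < 1 / p := by
        apply one_div_lt_one_div_of_lt hp
        nlinarith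
      calc 1 / |w + a| ≤ 1 / (3 * p ^ 2 - p) := h5
        _ < 1 / p := h6
        _ ≤ delta r := hδp
  rw [cPerm_zpow]
  rcases hx with rfl | ⟨s, rfl, hs⟩
  · have h1 : TPerm r none = some 0 := by
      rw [TPerm, moebius_apply, mfun, if_neg (by norm_num : (1 : ℚ) ≠ 0)]
      norm_num
    rw [Equiv.Perm.mul_apply, Equiv.Perm.mul_apply, h1]
    have h2 : transPerm a (some 0) = some a := by
      rw [transPerm, moebius_apply, mfun, if_neg (by norm_num : (0 : ℚ) * 0 + 1 ≠ 0)]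
      norm_num
    rw [h2]
    have := hrec 0 (by simpa using le_of_lt hp)
    simpa using this
  · have hsr : s - r ≠ 0 := by
      intro h0
      rw [h0] at hs
      simp at hs
      linarith
    have hcond1 : 1 * s + -r ≠ 0 := by intro h0; apply hsr; linarith
    have h1 : TPerm r (some s) = some ((0 * s + 1) / (1 * s + -r)) := by
      rw [TPerm, moebius_apply, mfun, if_neg hcond1]
    set w : ℚ := (0 * s + 1) / (1 * s + -r) with hw
    have hwval : w = 1 / (s - r) := by rw [hw]; congr 1 <;> ring
    have hwabs : |w| ≤ p := by
      rw [hwval, abs_div, abs_one]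
      have h2 : delta r ≤ |s - r| := hs
      have h3 : 0 < |s - r| := lt_of_lt_of_le hδ0 h2
      have h4 : 1 / |s - r| ≤ 1 / delta r := one_div_le_one_div_of_le hδ0 h2
      have h5 : 1 / delta r ≤ p := by
        rw [div_le_iff₀ hδ0]
        calc (1 : ℚ) = p * (1 / p) := by field_simp
        _ ≤ p * delta r := by
          apply mul_le_mul_of_nonneg_left hδp (le_of_lt hp)
      linarith
    rw [Equiv.Perm.mul_apply, Equiv.Perm.mul_apply, h1]
    have h2 : transPerm a (some w) = some (w + a) := by
      rw [transPerm, moebius_apply, mfun, if_neg (by norm_num : (0 : ℚ) * w + 1 ≠ 0)]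
      norm_num
    rw [h2]
    exact hrec w hwabs

theorem aff_maps {r : ℚ} (hr0 : 0 < r) (hr1 : r < 1) (b : Bool) (k : ℤ)
    (hne : ¬(b = true ∧ k = 0)) (s : ℚ) (hs : |s - r| < delta r) :
    delta r ≤ |(if b then 1 else -1 : ℚ) * s + 2 * k - r| := by
  have hδ0 : 0 < delta r := delta_pos hr0 hr1
  have hδr : delta r ≤ r := min_le_left _ _
  have hδ1r : delta r ≤ 1 - r := min_le_right _ _
  have hδh : delta r ≤ 1 / 2 := delta_le_half hr0 hr1
  cases b with
  | false =>
    show delta r ≤ |-1 * s + 2 * (k : ℚ) - r|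
    have hkr : delta r ≤ |(k : ℚ) - r| := by
      rcases le_or_gt (k : ℤ) 0 with hk0 | hk0
      · have : (k : ℚ) ≤ 0 := by exact_mod_cast hk0
        rw [abs_sub_comm, abs_of_pos (by linarith)]
        linarith
      · have : (1 : ℚ) ≤ (k : ℚ) := by exact_mod_cast hk0
        rw [abs_of_pos (by linarith)]
        linarith
    have key : -1 * s + 2 * (k : ℚ) - r = (2 * (k : ℚ) - 2 * r) - (s - r) := by ring
    rw [key]
    have h1 : |2 * (k : ℚ) - 2 * r| - |s - r| ≤ |(2 * (k : ℚ) - 2 * r) - (s - r)| :=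
      abs_sub_abs_le_abs_sub _ _
    have h2 : |2 * (k : ℚ) - 2 * r| = 2 * |(k : ℚ) - r| := by
      rw [show 2 * (k : ℚ) - 2 * r = 2 * ((k : ℚ) - r) by ring, abs_mul]
      norm_num
    linarith
  | true =>
    show delta r ≤ |1 * s + 2 * (k : ℚ) - r|
    have hk : k ≠ 0 := by
      intro h0
      exact hne ⟨rfl, h0⟩
    have hk1 : (1 : ℚ) ≤ |(k : ℚ)| := by
      have : 1 ≤ |k| := Int.one_le_abs hk
      calc (1 : ℚ) ≤ (|k| : ℤ) := by exact_mod_cast this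
      _ = |(k : ℚ)| := by push_cast; rfl
    have key : 1 * s + 2 * (k : ℚ) - r = 2 * (k : ℚ) - -(s - r) := by ring
    rw [key]
    have h1 : |2 * (k : ℚ)| - |-(s - r)| ≤ |2 * (k : ℚ) - -(s - r)| :=
      abs_sub_abs_le_abs_sub _ _
    rw [abs_neg] at h1
    have h2 : |2 * (k : ℚ)| = 2 * |(k : ℚ)| := by rw [abs_mul]; norm_num
    linarith
theorem aff_eq_one {b : Bool} {k : ℤ} (h : aff b k = 1) : b = true ∧ k = 0 := by
  have h0 := congrArg (fun g : Equiv.Perm (Option ℚ) => g (some 0)) h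
  have h1 := congrArg (fun g : Equiv.Perm (Option ℚ) => g (some 1)) h
  simp only [aff_apply, Equiv.Perm.one_apply, Option.some.injEq] at h0 h1
  have hk' : k = 0 := by
    cases b <;> simp at h0 <;> omega
  subst hk'
  cases b with
  | false => norm_num at h1
  | true => exact ⟨rfl, rfl⟩

theorem cpow_eq_one {r : ℚ} (hr0 : 0 < r) (hr1 : r < 1) {m : ℤ} (hm : 3 ≤ m) {k : ℤ}
    (h : (cPerm r m) ^ k = 1) : k = 0 := by
  by_contra hk
  obtain ⟨y, hy, _⟩ := cpow_maps hr0 hr1 hm hk none (Or.inl rfl)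
  rw [h] at hy
  simp at hy

/-- `ZMod 0` is definitionally `ℤ`. -/
def toZ : ZMod 0 → ℤ := fun i => i

theorem toZ_add (i j : ZMod 0) : toZ (i + j) = toZ i + toZ j := rfl
theorem toZ_sub (i j : ZMod 0) : toZ (i - j) = toZ i - toZ j := rfl
theorem toZ_zero : toZ 0 = 0 := rfl
theorem toZ_inj {i j : ZMod 0} (h : toZ i = toZ j) : i = j := h

/-- The homomorphism from the infinite dihedral group onto `⟨ρ, ρ'⟩`. -/
def dihedralHom : DihedralGroup 0 →* Equiv.Perm (Option ℚ) where
  toFun x := match x with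
    | .r i => aff true (toZ i)
    | .sr i => aff false (-(toZ i))
  map_one' := by
    show aff true (toZ 0) = 1
    rw [toZ_zero]; exact aff_one
  map_mul' x y := by
    rcases x with i | i <;> rcases y with j | j
    · show aff true (toZ (i + j)) = aff true (toZ i) * aff true (toZ j)
      rw [aff_mul, toZ_add]
      congr 1 <;> simp <;> ring
    · show aff false (-(toZ (j - i))) = aff true (toZ i) * aff false (-(toZ j))
      rw [aff_mul, toZ_sub]
      congr 1 <;> simp <;> ring
    · show aff false (-(toZ (i + j))) = aff false (-(toZ i)) * aff true (toZ j)
      rw [aff_mul, toZ_add]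
      congr 1 <;> simp <;> ring
    · show aff true (toZ (j - i)) = aff false (-(toZ i)) * aff false (-(toZ j))
      rw [aff_mul, toZ_sub]
      congr 1 <;> simp <;> ring

theorem dihedralHom_injective : Function.Injective dihedralHom := by
  rw [injective_iff_map_eq_one]
  rintro (i | i) h
  · have := aff_eq_one h
    have hi : i = 0 := toZ_inj (by rw [this.2, toZ_zero])
    rw [hi]; rfl
  · have := (aff_eq_one h).1
    simp at this
/-- Three distinct elements of `⟨ρ, ρ'⟩`. -/
theorem three_le_card_D :
    3 ≤ Cardinal.mk ↥(Subgroup.closure {rhoPerm, rhoPerm'} : Subgroup (Equiv.Perm (Option ℚ))) := by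
  set D := (Subgroup.closure {rhoPerm, rhoPerm'} : Subgroup (Equiv.Perm (Option ℚ)))
  have h1 : aff false 0 ∈ D := aff_mem_D false 0
  have h2 : aff true 1 ∈ D := aff_mem_D true 1
  have hne1 : aff false 0 ≠ 1 := fun h => by simpa using (aff_eq_one h).1
  have hne2 : aff true 1 ≠ 1 := fun h => by simpa using (aff_eq_one h).2
  have hne3 : aff false 0 ≠ aff true 1 := by
    intro h
    have h4 := congrArg (fun g : Equiv.Perm (Option ℚ) => g (some 0)) h
    norm_num [aff_apply] at h4
  let f3 : Fin 3 → ↥D := ![⟨1, one_mem D⟩, ⟨aff false 0, h1⟩, ⟨aff true 1, h2⟩]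
  have hinj : Function.Injective f3 := by
    intro i j hij
    fin_cases i <;> fin_cases j <;> simp_all [f3, Subtype.ext_iff] <;>
      first
        | rfl
        | (exact absurd hij.symm hne1) | (exact absurd hij hne1)
        | (exact absurd hij.symm hne2) | (exact absurd hij hne2)
        | (exact absurd hij.symm hne3) | (exact absurd hij hne3)
  calc (3 : Cardinal) = Cardinal.mk (Fin 3) := by simp
    _ ≤ Cardinal.mk ↥D := Cardinal.mk_le_of_injective hinj

/-- The two-element family of subgroups for the free-product decomposition. -/
def HFam (D C : Subgroup (Equiv.Perm (Option ℚ))) : Bool → Type :=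
  fun b => cond b ↥D ↥C

instance HFam.instGroup (D C : Subgroup (Equiv.Perm (Option ℚ))) :
    ∀ b, Group (HFam D C b) := fun b => by
  cases b
  · exact (inferInstance : Group ↥C)
  · exact (inferInstance : Group ↥D)

/-- The inclusion homomorphisms. -/
def fFam (D C : Subgroup (Equiv.Perm (Option ℚ))) :
    ∀ b, HFam D C b →* Equiv.Perm (Option ℚ) := fun b =>
  match b with
  | true => D.subtype
  | false => C.subtype

/-- The comparison homomorphisms into the binary coproduct. -/
def gFam (D C : Subgroup (Equiv.Perm (Option ℚ))) :
    ∀ b, HFam D C b →* Monoid.Coprod ↥D ↥C := fun b =>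
  match b with
  | true => Monoid.Coprod.inl
  | false => Monoid.Coprod.inr
theorem gamma_free_product' (r : ℚ) (hr0 : 0 < r) (hr1 : r < 1) (m : ℤ) (hm : 3 ≤ m) :
    Nonempty ((Subgroup.closure {rhoPerm, rhoPerm'} : Subgroup (Equiv.Perm (Option ℚ)))
        ≃* DihedralGroup 0) ∧
    Nonempty ((Subgroup.closure {cPerm r m} : Subgroup (Equiv.Perm (Option ℚ)))
        ≃* Multiplicative ℤ) ∧
    Function.Injective
      (Monoid.Coprod.lift
        (Subgroup.closure {rhoPerm, rhoPerm'} : Subgroup (Equiv.Perm (Option ℚ))).subtype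
        (Subgroup.closure {cPerm r m} : Subgroup (Equiv.Perm (Option ℚ))).subtype) ∧
    (Monoid.Coprod.lift
        (Subgroup.closure {rhoPerm, rhoPerm'} : Subgroup (Equiv.Perm (Option ℚ))).subtype
        (Subgroup.closure {cPerm r m} : Subgroup (Equiv.Perm (Option ℚ))).subtype).range
      = Gamma r m := by
  classical
  have hδ0 : 0 < delta r := delta_pos hr0 hr1
  -- Part 1 : the dihedral part
  have hrangeD : dihedralHom.range
      = (Subgroup.closure {rhoPerm, rhoPerm'} : Subgroup (Equiv.Perm (Option ℚ))) := by
    apply le_antisymm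
    · rintro g ⟨x, rfl⟩
      rcases x with i | i
      · exact aff_mem_D true (toZ i)
      · exact aff_mem_D false (-(toZ i))
    · rw [Subgroup.closure_le]
      rintro g hg
      rcases hg with rfl | rfl
      · refine ⟨DihedralGroup.sr 0, ?_⟩
        show aff false (-(toZ 0)) = rhoPerm
        rw [toZ_zero, neg_zero, aff_rho]
      · refine ⟨DihedralGroup.sr (-1), ?_⟩
        show aff false (-(toZ (-1))) = rhoPerm'
        rw [show -(toZ (-1)) = 1 from rfl, aff_rho']
  refine ⟨⟨(MulEquiv.subgroupCongr hrangeD.symm).trans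
    (MonoidHom.ofInjective dihedralHom_injective).symm⟩, ?_, ?_, ?_⟩
  -- Part 2 : the cyclic part
  · set ψ := zpowersHom (Equiv.Perm (Option ℚ)) (cPerm r m) with hψ
    have hψinj : Function.Injective ψ := by
      rw [injective_iff_map_eq_one]
      intro n hn
      rw [hψ, zpowersHom_apply] at hn
      have := cpow_eq_one hr0 hr1 hm hn
      exact this
    have hrangeC : ψ.range
        = (Subgroup.closure {cPerm r m} : Subgroup (Equiv.Perm (Option ℚ))) := by
      ext g
      rw [MonoidHom.mem_range, Subgroup.mem_closure_singleton]
      constructor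
      · rintro ⟨n, rfl⟩
        exact ⟨n.toAdd, rfl⟩
      · rintro ⟨k, rfl⟩
        exact ⟨Multiplicative.ofAdd k, rfl⟩
    exact ⟨(MulEquiv.subgroupCongr hrangeC.symm).trans
      (MonoidHom.ofInjective hψinj).symm⟩
  -- Part 3 : injectivity (the ping-pong lemma)
  · set D := (Subgroup.closure {rhoPerm, rhoPerm'} : Subgroup (Equiv.Perm (Option ℚ))) with hDdef
    set C := (Subgroup.closure {cPerm r m} : Subgroup (Equiv.Perm (Option ℚ))) with hCdef
    set XD : Set (Option ℚ) :=
      {x | x = none ∨ ∃ s, x = some s ∧ delta r ≤ |s - r|} with hXD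
    set XC : Set (Option ℚ) := {x | ∃ s, x = some s ∧ |s - r| < delta r} with hXC
    have hdisjDC : Disjoint XD XC := by
      rw [Set.disjoint_left]
      rintro x hx ⟨s, rfl, hlt⟩
      rcases hx with h | ⟨s', heq, hge⟩
      · simp at h
      · rw [Option.some.injEq] at heq
        subst heq
        linarith
    have hpingpong : Function.Injective (Monoid.CoprodI.lift (fFam D C)) := by
      apply Monoid.CoprodI.lift_injective_of_ping_pong (fFam D C)
        (Or.inr ⟨true, three_le_card_D⟩) (fun b => cond b XD XC)
      · intro b
        cases b
        · exact ⟨some r, r, rfl, by simpa using hδ0⟩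
        · exact ⟨none, Or.inl rfl⟩
      · intro i j hij
        cases i <;> cases j
        · exact absurd rfl hij
        · exact hdisjDC.symm
        · exact hdisjDC
        · exact absurd rfl hij
      · intro i j hij
        cases i <;> cases j
        · exact absurd rfl hij
        · -- i = false (the C side), j = true (the D side)
          intro cc hcc y hy
          rcases Set.mem_smul_set.mp hy with ⟨x, hx, rfl⟩
          let cc' : ↥C := cc
          obtain ⟨k, hk⟩ := Subgroup.mem_closure_singleton.mp cc'.2
          have hkne : k ≠ 0 := by
            rintro rfl
            have h1 : (cc' : Equiv.Perm (Option ℚ)) = 1 := by simpa using hk.symm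
            exact hcc (Subtype.ext h1)
          obtain ⟨y', hy', hlt⟩ := cpow_maps hr0 hr1 hm hkne x hx
          have happ : (fFam D C false) cc • x = some y' := by
            rw [Equiv.Perm.smul_def]
            show (cc' : Equiv.Perm (Option ℚ)) x = some y'
            rw [← hk]
            exact hy'
          rw [happ]
          exact ⟨y', rfl, hlt⟩
        · -- i = true (the D side), j = false (the C side)
          intro d hd y hy
          rcases Set.mem_smul_set.mp hy with ⟨x, hx, rfl⟩
          obtain ⟨s, rfl, hs⟩ := hx
          let d' : ↥D := d
          obtain ⟨b, k, hform⟩ := mem_D_form d'.2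
          have hne : ¬(b = true ∧ k = 0) := by
            rintro ⟨rfl, rfl⟩
            have h1 : (d' : Equiv.Perm (Option ℚ)) = 1 := by rw [hform, aff_one]
            exact hd (Subtype.ext h1)
          have happ : (fFam D C true) d • (some s : Option ℚ)
              = some ((if b then 1 else -1 : ℚ) * s + 2 * k) := by
            rw [Equiv.Perm.smul_def]
            show (d' : Equiv.Perm (Option ℚ)) (some s) = _
            rw [hform, aff_apply]
          rw [happ]
          exact Or.inr ⟨_, rfl, aff_maps hr0 hr1 b k hne s hs⟩
        · exact absurd rfl hij
    set e : Monoid.Coprod ↥D ↥C →* Monoid.CoprodI (HFam D C) :=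
      Monoid.Coprod.lift
        (@Monoid.CoprodI.of Bool (HFam D C) _ true)
        (@Monoid.CoprodI.of Bool (HFam D C) _ false) with he
    have hLeft : ∀ x, (Monoid.CoprodI.lift (gFam D C)) (e x) = x := by
      have hcomp : (Monoid.CoprodI.lift (gFam D C)).comp e = MonoidHom.id _ := by
        refine Monoid.Coprod.hom_ext (MonoidHom.ext fun x => ?_) (MonoidHom.ext fun x => ?_)
        · show (Monoid.CoprodI.lift (gFam D C)) (e (Monoid.Coprod.inl x)) = Monoid.Coprod.inl x
          rfl
        · show (Monoid.CoprodI.lift (gFam D C)) (e (Monoid.Coprod.inr x)) = Monoid.Coprod.inr x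
          rfl
      intro x
      have := DFunLike.congr_fun hcomp x
      simpa using this
    have heinj : Function.Injective e := by
      intro x y hxy
      rw [← hLeft x, ← hLeft y, hxy]
    have hKey : (Monoid.CoprodI.lift (fFam D C)).comp e
        = Monoid.Coprod.lift D.subtype C.subtype := by
      refine Monoid.Coprod.hom_ext (MonoidHom.ext fun x => ?_) (MonoidHom.ext fun x => ?_)
      · show (Monoid.CoprodI.lift (fFam D C)) (e (Monoid.Coprod.inl x))
            = Monoid.Coprod.lift D.subtype C.subtype (Monoid.Coprod.inl x)
        rfl
      · show (Monoid.CoprodI.lift (fFam D C)) (e (Monoid.Coprod.inr x))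
            = Monoid.Coprod.lift D.subtype C.subtype (Monoid.Coprod.inr x)
        rfl
    rw [← hKey, MonoidHom.coe_comp]
    exact Function.Injective.comp hpingpong heinj
  -- Part 4 : the range is `Γ`
  · rw [Monoid.Coprod.range_lift, Subgroup.range_subtype, Subgroup.range_subtype,
      ← Subgroup.closure_union, Gamma]
    congr 1
    ext x
    simp only [Set.mem_union, Set.mem_insert_iff, Set.mem_singleton_iff]
    tauto
/-- `D = ⟨ρ, ρ'⟩` is infinite dihedral, `C = ⟨c⟩` is infinite cyclic, and
`Γ_{r,n}` is the internal free product of `D` and `C`: the homomorphism `D ∗ C → Perm(ℚ ∪ {∞})`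
induced by the inclusions is injective with image `Γ_{r,n}`. -/
theorem gamma_free_product (r : ℚ) (hr0 : 0 < r) (hr1 : r < 1) (m : ℤ) (hm : 3 ≤ m) :
    Nonempty ((Subgroup.closure {rhoPerm, rhoPerm'} : Subgroup (Equiv.Perm (Option ℚ)))
        ≃* DihedralGroup 0) ∧
    Nonempty ((Subgroup.closure {cPerm r m} : Subgroup (Equiv.Perm (Option ℚ)))
        ≃* Multiplicative ℤ) ∧
    Function.Injective
      (Monoid.Coprod.lift
        (Subgroup.closure {rhoPerm, rhoPerm'} : Subgroup (Equiv.Perm (Option ℚ))).subtype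
        (Subgroup.closure {cPerm r m} : Subgroup (Equiv.Perm (Option ℚ))).subtype) ∧
    (Monoid.Coprod.lift
        (Subgroup.closure {rhoPerm, rhoPerm'} : Subgroup (Equiv.Perm (Option ℚ))).subtype
        (Subgroup.closure {cPerm r m} : Subgroup (Equiv.Perm (Option ℚ))).subtype).range
      = Gamma r m := by
  exact gamma_free_product' r hr0 hr1 m hm

end Heckoid
end

section
/- Let α > β ≥ 1 be coprime integers, n ≥ 2 an integer, m = 2n, d ≥ 2 an integer, and e ∈ {+1, −1}. Set α* = α^d m and β* = α^{d−1} m (α−β) + e. Then gcd(α*, β*) = 1, 0 < β*/α* < 1, and there exists an upper-meridian-pair-preserving epimorphism from the 2-bridge link group G(K(β*/α*)) = ⟨a, b | u_{β*/α*}⟩ onto the even Heckoid group H((α−β)/α; n) = ⟨a, b | u_{(α−β)/α}^n⟩ (this recovers the even-index case of Riley's construction of epimorphisms onto Heckoid groups). -/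
namespace Heckoid

namespace Riley

/-! Sign arithmetic -/

def sg (x : ℤ) : ℤ := (x.negOnePow : ℤ)

lemma sg_even {x : ℤ} (h : Even x) : sg x = 1 := by simp [sg, Int.negOnePow_even _ h]
lemma sg_odd {x : ℤ} (h : Odd x) : sg x = -1 := by simp [sg, Int.negOnePow_odd _ h]
lemma sg_add_even {x y : ℤ} (h : Even y) : sg (x + y) = sg x := by
  simp [sg, Int.negOnePow_add, Int.negOnePow_even _ h]
lemma sg_add_odd {x y : ℤ} (h : Odd y) : sg (x + y) = - sg x := by
  simp [sg, Int.negOnePow_add, Int.negOnePow_odd _ h, mul_comm]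
lemma sg_neg (x : ℤ) : sg (-x) = sg x := by simp [sg]
lemma sg_natAbs (x : ℤ) : ((-1 : ℤ)) ^ x.natAbs = sg x := by
  rcases Int.even_or_odd x with h | h
  · rw [sg_even h, Even.neg_one_pow (Int.natAbs_even.mpr h)]
  · rw [sg_odd h, Odd.neg_one_pow (Int.natAbs_odd.mpr h)]
lemma sg_zero : sg 0 = 1 := sg_even ⟨0, by norm_num⟩

/-! Letters -/

def letZ (i : ℤ) : FG := if i % 2 = 0 then ga else gb

lemma letZ_congr {i j : ℤ} (h : (2 : ℤ) ∣ (i - j)) : letZ i = letZ j := by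
  have : i % 2 = j % 2 := Int.ModEq.symm (Int.modEq_iff_dvd.mpr h)
  simp [letZ, this]

lemma genAt_eq (m : ℕ) : genAt m = letZ (m : ℤ) := by
  rcases Nat.even_or_odd m with h | h
  · have h1 : m % 2 = 0 := Nat.even_iff.mp h
    have h2 : (m : ℤ) % 2 = 0 := by omega
    simp [genAt, letZ, h1, h2]
  · have h1 : m % 2 = 1 := Nat.odd_iff.mp h
    have h2 : (m : ℤ) % 2 = 1 := by omega
    simp [genAt, letZ, h1, h2]

/-! Windows -/

def win (f : ℤ → FG) (k : ℤ) : ℕ → FG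
  | 0 => 1
  | (L+1) => win f k L * f (k + L)

@[simp] lemma win_zero (f : ℤ → FG) (k : ℤ) : win f k 0 = 1 := rfl
lemma win_succ (f : ℤ → FG) (k : ℤ) (L : ℕ) : win f k (L+1) = win f k L * f (k + L) := rfl

lemma win_succ' (f : ℤ → FG) (k : ℤ) (L : ℕ) : win f k (L+1) = f k * win f (k+1) L := by
  induction L generalizing k with
  | zero => simp [win_succ]
  | succ L ih =>
      rw [win_succ, ih, win_succ, mul_assoc]
      congr 2
      push_cast
      ring_nf

lemma win_add (f : ℤ → FG) (k : ℤ) (L1 L2 : ℕ) :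
    win f k (L1 + L2) = win f k L1 * win f (k + L1) L2 := by
  induction L2 with
  | zero => simp
  | succ L ih =>
      rw [← Nat.add_assoc, win_succ, ih, win_succ, mul_assoc]
      congr 2
      push_cast
      ring

lemma win_congr {f g : ℤ → FG} {k m : ℤ} {L : ℕ}
    (h : ∀ j : ℕ, j < L → f (k + j) = g (m + j)) : win f k L = win g m L := by
  induction L with
  | zero => simp
  | succ L ih =>
      rw [win_succ, win_succ, ih fun j hj => h j (by omega), h L (by omega)]

lemma win_inv {f g : ℤ → FG} {k t : ℤ} {L : ℕ}
    (h : ∀ j : ℕ, j < L → f (k + j) = (g (t - (k + j)))⁻¹) :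
    win f k L = (win g (t - k - L + 1) L)⁻¹ := by
  induction L with
  | zero => simp
  | succ L ih =>
      rw [win_succ, ih fun j hj => h j (by omega), h L (by omega)]
      have h2 : win g (t - k - (L+1 : ℕ) + 1) (L + 1)
          = g (t - k - (L+1 : ℕ) + 1) * win g (t - k - (L+1 : ℕ) + 1 + 1) L := win_succ' ..
      have e2 : t - k - (L+1 : ℕ) + 1 + 1 = t - k - L + 1 := by push_cast; ring
      have e1 : t - k - (L+1 : ℕ) + 1 = t - (k + L) := by push_cast; ring
      rw [h2, e2, e1, mul_inv_rev]

lemma win_period_mul {f : ℤ → FG} {T : ℤ} (hper : ∀ i, f (i + T) = f i) :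
    ∀ (m : ℕ) (i : ℤ), f (i + T * m) = f i := by
  intro m
  induction m with
  | zero => simp
  | succ m ih =>
      intro i
      have : i + T * (m + 1 : ℕ) = (i + T) + T * m := by push_cast; ring
      rw [this, ih, hper]

lemma win_shift {f : ℤ → FG} {T : ℤ} (hper : ∀ i, f (i + T) = f i) (m : ℕ) (k : ℤ) (L : ℕ) :
    win f (k + T * m) L = win f k L :=
  win_congr fun j _ => by
    have : k + T * m + j = (k + j) + T * m := by ring
    rw [this, win_period_mul hper]

lemma win_step {f : ℤ → FG} {L : ℕ} (hper : ∀ i, f (i + L) = f i) (k : ℤ) :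
    win f (k + 1) L = (f k)⁻¹ * win f k L * f k := by
  have h1 : win f k (L+1) = win f k L * f (k + L) := win_succ ..
  have h2 : win f k (L+1) = f k * win f (k+1) L := win_succ' ..
  have h3 : f (k + L) = f k := hper k
  rw [h3] at h1
  have h5 : f k * win f (k+1) L = win f k L * f k := h2.symm.trans h1
  calc win f (k+1) L = (f k)⁻¹ * (f k * win f (k+1) L) := (inv_mul_cancel_left _ _).symm
    _ = (f k)⁻¹ * (win f k L * f k) := by rw [h5]
    _ = (f k)⁻¹ * win f k L * f k := (mul_assoc _ _ _).symm

lemma win_conj {f : ℤ → FG} {L : ℕ} (hper : ∀ i, f (i + L) = f i) (k : ℤ) :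
    ∃ w : FG, win f k L = w * win f 0 L * w⁻¹ := by
  induction k using Int.induction_on with
  | zero => exact ⟨1, by simp⟩
  | succ k ih =>
      obtain ⟨w, hw⟩ := ih
      refine ⟨(f k)⁻¹ * w, ?_⟩
      rw [win_step hper, hw]
      group
  | pred k ih =>
      obtain ⟨w, hw⟩ := ih
      refine ⟨f (-k - 1) * w, ?_⟩
      have hstep := win_step hper (-k - 1)
      have e : (-k - 1 + 1 : ℤ) = -k := by ring
      rw [e] at hstep
      -- hstep : win f (-k) L = (f (-k-1))⁻¹ * win f (-k-1) L * f (-k-1)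
      rw [hstep] at hw
      calc win f (-(k:ℤ)-1) L
          = f (-(k:ℤ)-1) * ((f (-(k:ℤ)-1))⁻¹ * win f (-(k:ℤ)-1) L * f (-(k:ℤ)-1)) * (f (-(k:ℤ)-1))⁻¹ := by
            group
        _ = f (-(k:ℤ)-1) * (w * win f 0 L * w⁻¹) * (f (-(k:ℤ)-1))⁻¹ := by rw [hw]
        _ = f (-(k:ℤ)-1) * w * win f 0 L * (f (-(k:ℤ)-1) * w)⁻¹ := by
            group

lemma win_split_mem {N : Subgroup FG} {f : ℤ → FG} {L : ℕ} {k : ℤ} :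
    ∀ {R : ℕ}, (∀ t : ℕ, t < R → win f (k + (L * t : ℕ)) L ∈ N) → win f k (L * R) ∈ N := by
  intro R
  induction R with
  | zero => intro _; simp
  | succ R ih =>
      intro h
      have : L * (R + 1) = L * R + L := by ring
      rw [this, win_add]
      exact mul_mem (ih fun t ht => h t (by omega)) (by simpa using h R (by omega))

lemma ediv_shift {c A B : ℤ} (h : c ∣ A - B) (u : ℤ) :
    (u + A) / c = (u + B) / c + (A - B) / c := by
  rcases eq_or_ne c 0 with rfl | hc
  · have : A = B := by omega
    subst this; simp
  · obtain ⟨t, ht⟩ := h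
    have hA : A = B + t * c := by linear_combination ht
    subst hA
    rw [← add_assoc, Int.add_mul_ediv_right _ _ hc]
    have : B + t * c - B = t * c := by ring
    rw [this, Int.mul_ediv_cancel _ hc]

lemma ediv_small {c x : ℤ} (h0 : 0 ≤ x) (h1 : x < c) : x / c = 0 :=
  Int.ediv_eq_zero_of_lt h0 h1

lemma ediv_neg' {c : ℤ} (hc : 0 < c) (z : ℤ) : (-z) / c = -((z + c - 1) / c) := by
  have hed := Int.mul_ediv_add_emod z c
  set qz := z / c with hq
  set r := z % c with hr
  have hr0 : 0 ≤ r := Int.emod_nonneg z hc.ne'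
  have hrc : r < c := Int.emod_lt_of_pos z hc
  rcases eq_or_lt_of_le hr0 with h0 | h0
  · -- r = 0
    have hz : z = c * qz := by omega
    have h1 : -z = (0 : ℤ) + (-qz) * c := by rw [hz]; ring
    have h2 : z + c - 1 = (c - 1) + qz * c := by rw [hz]; ring
    rw [h1, Int.add_mul_ediv_right _ _ hc.ne', h2, Int.add_mul_ediv_right _ _ hc.ne',
      ediv_small (by omega) (by omega), ediv_small (by omega) (by omega)]
    ring
  · have hz : z = c * qz + r := by omega
    have h1 : -z = (c - r) + (-qz - 1) * c := by rw [hz]; ring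
    have h2 : z + c - 1 = (r - 1) + (qz + 1) * c := by rw [hz]; ring
    rw [h1, Int.add_mul_ediv_right _ _ hc.ne', h2, Int.add_mul_ediv_right _ _ hc.ne',
      ediv_small (by omega) (by omega), ediv_small (by omega) (by omega)]
    ring

lemma ediv_add_sub_one {c z : ℤ} (hc : 0 < c) (h : ¬ c ∣ z) : (z + c - 1) / c = z / c + 1 := by
  have hed := Int.mul_ediv_add_emod z c
  set qz := z / c
  set r := z % c with hr
  have hr0 : 0 ≤ r := Int.emod_nonneg z hc.ne'
  have hrc : r < c := Int.emod_lt_of_pos z hc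
  have hrne : r ≠ 0 := fun h0 => h (Int.dvd_of_emod_eq_zero (by omega))
  have h2 : z + c - 1 = (r - 1) + (qz + 1) * c := by linear_combination - hed
  rw [h2, Int.add_mul_ediv_right _ _ hc.ne', ediv_small (by omega) (by omega)]
  ring

lemma ediv_ediv {b c : ℤ} (hb : 0 < b) (hc : 0 < c) (a : ℤ) : a / (b * c) = a / b / c := by
  have hbc : 0 < b * c := mul_pos hb hc
  have hed := Int.mul_ediv_add_emod a (b * c)
  set k := a / (b * c)
  set r := a % (b * c) with hr
  have hr0 : 0 ≤ r := Int.emod_nonneg a hbc.ne'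
  have hrc : r < b * c := Int.emod_lt_of_pos a hbc
  have h1 : a = r + (c * k) * b := by linear_combination - hed
  have h2 : a / b = r / b + c * k := by rw [h1, Int.add_mul_ediv_right _ _ hb.ne']
  have h3 : a / b / c = (r / b) / c + k := by
    rw [h2]
    have : r / b + c * k = r / b + k * c := by ring
    rw [this, Int.add_mul_ediv_right _ _ hc.ne']
  have h4 : r / b < c := by
    rcases Int.lt_or_le (r / b) c with h | h
    · exact h
    · exfalso
      have hcb : c * b ≤ (r / b) * b := mul_le_mul_of_nonneg_right h hb.le
      have h5 : (r / b) * b ≤ r := Int.ediv_mul_le r hb.ne'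
      nlinarith
  have h5 : (r / b) / c = 0 := ediv_small (Int.ediv_nonneg hr0 hb.le) h4
  omega


/-! Patterns -/

def pat (q c g : ℤ) (i : ℤ) : FG := letZ i ^ sg ((i * q + g) / c)

lemma pat_period {q c : ℤ} (hc : c ≠ 0) (g i : ℤ) : pat q c g (i + 2 * c) = pat q c g i := by
  unfold pat
  have h1 : letZ (i + 2 * c) = letZ i := letZ_congr ⟨c, by ring⟩
  have h2 : (i + 2 * c) * q + g = (i * q + g) + (2 * q) * c := by ring
  rw [h1, h2, Int.add_mul_ediv_right _ _ hc, sg_add_even ⟨q, by ring⟩]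

lemma pat_period_mul {q c : ℤ} (hc : c ≠ 0) {T : ℤ} (hT : (2 * c) ∣ T) (g i : ℤ) :
    pat q c g (i + T) = pat q c g i := by
  obtain ⟨m, rfl⟩ := hT
  rcases le_or_gt 0 m with hm | hm
  · lift m to ℕ using hm
    have : (2 : ℤ) * c * m = (2 * c) * m := by ring
    rw [this]
    exact win_period_mul (f := pat q c g) (T := 2 * c) (pat_period hc g) m i
  · obtain ⟨m', rfl⟩ : ∃ m' : ℕ, m = -(m' : ℤ) := ⟨(-m).toNat, by omega⟩
    have h := win_period_mul (f := pat q c g) (T := 2 * c) (pat_period hc g) m' (i + 2 * c * (-(m' : ℤ)))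
    have e : i + 2 * c * (-(m' : ℤ)) + (2 * c) * m' = i := by ring
    rw [e] at h
    exact h.symm

lemma pat_shift_of_even {q c g t : ℤ} (hc : 0 < c) (ht : Even t)
    (hd : (2 * c) ∣ (t * q - g)) (i : ℤ) : pat q c g i = pat q c 0 (i + t) := by
  unfold pat
  obtain ⟨w, hw⟩ := hd
  have h1 : letZ (i + t) = letZ i := by
    obtain ⟨s, rfl⟩ := ht
    exact letZ_congr ⟨s, by ring⟩
  have h2 : (i + t) * q + 0 = (i * q + g) + (t * q - g) := by ring
  have h3 : ((i * q + g) + (t * q - g)) / c = (i * q + g) / c + 2 * w := by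
    have : (i * q + g) + (t * q - g) = (i * q + g) + (2 * w) * c := by rw [hw]; ring
    rw [this, Int.add_mul_ediv_right _ _ hc.ne']
  rw [h1, h2, h3, sg_add_even ⟨w, by ring⟩]

lemma pat_shift_of_odd {q c g t : ℤ} (hc : 0 < c) (ht : Even t)
    (hd : (2 * c) ∣ (t * q + g + 1)) (i : ℤ) : pat q c g i = (pat q c 0 (t - i))⁻¹ := by
  unfold pat
  obtain ⟨w, hw⟩ := hd
  have h1 : letZ (t - i) = letZ i := by
    obtain ⟨s, hs⟩ := ht
    exact letZ_congr ⟨s - i, by omega⟩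
  have h2 : (t - i) * q + 0 = -(i * q - t * q) := by ring
  have h3 : (-(i * q - t * q)) / c = -((i * q - t * q + c - 1) / c) := ediv_neg' hc _
  have h4 : i * q - t * q + c - 1 = i * q + (-(t * q) + c - 1) := by ring
  have h5 : i * q + (-(t * q) + c - 1) = (i * q + g) + ((-(t*q) + c - 1) - g) + g - g := by ring
  have hdc : c ∣ (-(t * q) + c - 1) - g := ⟨1 - 2 * w, by linear_combination - hw⟩
  have h6 : (i * q + (-(t * q) + c - 1)) / c = (i * q + g) / c + (1 - 2 * w) := by
    have := ediv_shift (c := c) (A := -(t * q) + c - 1) (B := g) hdc (i * q)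
    rw [this]
    congr 1
    have he : (-(t * q) + c - 1) - g = (1 - 2 * w) * c := by linear_combination - hw
    rw [he, Int.mul_ediv_cancel _ hc.ne']
  rw [h1, h2]
  rw [h3, h4, h6]
  have h8 : sg (-((i * q + g) / c + (1 - 2 * w))) = - sg ((i * q + g) / c) := by
    rw [sg_neg, sg_add_odd ⟨-w, by ring⟩]
  rw [h8, zpow_neg, inv_inv]


/-! Existence of shifts -/

lemma exists_shift {q c : ℤ} (hco : IsCoprime q c) (G : ℤ) :
    ∃ t : ℤ, Even t ∧ (2 * c) ∣ (t * q - 2 * G) := by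
  obtain ⟨u, v, huv⟩ := hco
  refine ⟨2 * G * u, ⟨G * u, by ring⟩, ⟨-(G * v), ?_⟩⟩
  linear_combination (2 * G) * huv

/-! The word as a window product -/

lemma list_prod_eq_win (h : ℕ → FG) (f : ℤ → FG) (k : ℤ) (n : ℕ)
    (hm : ∀ j : ℕ, j < n → h j = f (k + j)) :
    ((List.range n).map h).prod = win f k n := by
  induction n with
  | zero => simp
  | succ n ih =>
      rw [List.range_succ, List.map_append, List.prod_append, win_succ,
        ih fun j hj => hm j (by omega)]
      simp [hm n (by omega)]

lemma isCoprime_den_num (t : ℚ) : IsCoprime (t.den : ℤ) t.num := by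
  rw [Int.isCoprime_iff_gcd_eq_one, Int.gcd]
  simp only [Int.natAbs_natCast]
  exact Nat.Coprime.symm t.reduced

lemma uWord_eq_win (t : ℚ) :
    uWord t = win (pat t.num (t.den : ℤ) 0) 0 (2 * t.den) := by
  set q : ℤ := t.num with hq
  set p : ℕ := t.den with hp
  have hp0 : 0 < p := t.pos
  have hP0 : (0 : ℤ) < (p : ℤ) := by exact_mod_cast hp0
  set f : ℤ → FG := pat q (p : ℤ) 0 with hf
  have hco : IsCoprime (p : ℤ) q := isCoprime_den_num t
  have hcast : ((p - 1 : ℕ) : ℤ) = (p : ℤ) - 1 := by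
    have := hp0; push_cast [this]; omega
  -- pointwise identification with vWord letters
  have hletter : ∀ j : ℕ, genAt j ^ epsSign q p j = f (j : ℤ) := by
    intro j
    rw [genAt_eq]
    show _ = pat q (p : ℤ) 0 _
    unfold pat epsSign
    rw [Int.fdiv_eq_ediv_of_nonneg _ hP0.le, sg_natAbs, add_zero]
  have hv : vWord q p = win f 1 (p - 1) := by
    unfold vWord
    refine list_prod_eq_win _ _ _ _ fun j hj => ?_
    rw [hletter (j + 1)]
    congr 1
    push_cast
    ring
  -- the reversal identity
  have hcore : ∀ i : ℤ, 1 ≤ i → i < p → f (2 * p - i) = (f i)⁻¹ := by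
    intro i hi1 hip
    have hnd : ¬ ((p : ℤ) ∣ i * q) := by
      intro hdvd
      have h1 : (p : ℤ) ∣ i := hco.dvd_of_dvd_mul_right hdvd
      have := Int.le_of_dvd (by omega) h1
      omega
    show pat q (p : ℤ) 0 _ = (pat q (p : ℤ) 0 _)⁻¹
    unfold pat
    have h1 : letZ (2 * p - i) = letZ i := letZ_congr ⟨(p : ℤ) - i, by ring⟩
    have h2 : (2 * (p : ℤ) - i) * q + 0 = -(i * q) + (2 * q) * p := by ring
    have h3 : ((2 * (p : ℤ) - i) * q + 0) / p = -((i * q + p - 1) / p) + 2 * q := by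
      rw [h2, Int.add_mul_ediv_right _ _ hP0.ne', ediv_neg' hP0]
    have h4 : (i * q + (p : ℤ) - 1) / p = i * q / p + 1 := ediv_add_sub_one hP0 hnd
    have h5 : ((2 * (p : ℤ) - i) * q + 0) / p = (i * q / p) + (-2 * (i * q / p) + 2 * q - 1) := by
      rw [h3, h4]; ring
    rw [h1, h5, sg_add_odd ⟨-(i * q / p) + q - 1, by ring⟩, zpow_neg]
    congr 2
    rw [add_zero]
  have hrev : win f ((p : ℤ) + 1) (p - 1) = (vWord q p)⁻¹ := by
    rw [hv]
    have h := win_inv (f := f) (g := f) (k := (p : ℤ) + 1) (t := 2 * p) (L := p - 1)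
      (fun j hj => ?_)
    · rw [h]
      congr 2
      rw [hcast]
      ring
    · have hj' : (j : ℤ) < (p : ℤ) - 1 := by
        rw [← hcast]; exact_mod_cast hj
      have h1 : (1 : ℤ) ≤ 2 * p - ((p : ℤ) + 1 + j) := by omega
      have h2 : 2 * (p : ℤ) - ((p : ℤ) + 1 + j) < p := by omega
      have := hcore _ h1 h2
      have e : 2 * (p : ℤ) - (2 * (p : ℤ) - ((p : ℤ) + 1 + j)) = (p : ℤ) + 1 + j := by ring
      rw [e] at this
      rw [this]
  -- values at 0 and p
  have hf0 : f 0 = ga := by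
    show pat q (p : ℤ) 0 0 = ga
    unfold pat
    norm_num [sg_zero, letZ]
  have hfp : f (p : ℤ) = (if p % 2 = 1 then gb ^ ((-1 : ℤ) ^ q.natAbs) else ga⁻¹) := by
    show pat q (p : ℤ) 0 _ = _
    unfold pat
    have h1 : ((p : ℤ) * q + 0) / p = q := by
      rw [add_zero, mul_comm, Int.mul_ediv_cancel _ hP0.ne']
    rw [h1]
    rcases Nat.even_or_odd p with hpar | hpar
    · have hm : p % 2 = 0 := Nat.even_iff.mp hpar
      have hmZ : (p : ℤ) % 2 = 0 := by omega
      have hqodd : Odd q := by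
        rcases Int.even_or_odd q with hq2 | hq2
        · exfalso
          have h2 : (2 : ℕ) ∣ q.natAbs := (Int.natAbs_even.mpr hq2).two_dvd
          have h3 : (2 : ℕ) ∣ p := hpar.two_dvd
          have h4 : (2 : ℕ) ∣ Nat.gcd q.natAbs p := Nat.dvd_gcd h2 h3
          have h5 : Nat.gcd q.natAbs p = 1 := t.reduced
          omega
        · exact hq2
      rw [sg_odd hqodd]
      simp [letZ, hmZ, hm, zpow_neg, zpow_one]
    · have hm : p % 2 = 1 := Nat.odd_iff.mp hpar
      have hmZ : (p : ℤ) % 2 = 1 := by omega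
      rw [sg_natAbs]
      simp [letZ, hmZ, hm]
  -- assembling
  have hsplit : 2 * p = 1 + ((p - 1) + (1 + (p - 1))) := by omega
  rw [hsplit, win_add, win_add, win_add]
  have e1 : (0 : ℤ) + (1 : ℕ) = 1 := by norm_num
  have e2 : (1 : ℤ) + ((p - 1 : ℕ) : ℤ) = (p : ℤ) := by rw [hcast]; ring
  have e3 : ((p : ℤ)) + (1 : ℕ) = (p : ℤ) + 1 := by norm_num
  rw [e1, e2, e3]
  have hw1 : win f 0 1 = f 0 := by simp [win_succ]
  have hwp : win f (p : ℤ) 1 = f (p : ℤ) := by simp [win_succ]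
  rw [hw1, hwp, hf0, hfp, hrev, ← hv]
  unfold uWord
  rw [← hq, ← hp]
  by_cases hc : p % 2 = 1
  · simp only [if_pos hc]
    group
  · simp only [if_neg hc]
    group


lemma uWord_pow_eq_win (t : ℚ) (n : ℕ) :
    uWord t ^ n = win (pat t.num (t.den : ℤ) 0) 0 (2 * t.den * n) := by
  set p : ℕ := t.den with hp
  have hp0 : 0 < p := t.pos
  have hP0 : ((p : ℤ)) ≠ 0 := by positivity
  set f : ℤ → FG := pat t.num (p : ℤ) 0 with hf
  have hper : ∀ i, f (i + (2 * p : ℕ)) = f i := by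
    intro i
    show pat _ _ _ _ = pat _ _ _ _
    have : ((2 * p : ℕ) : ℤ) = 2 * (p : ℤ) := by push_cast; ring
    rw [this]
    exact pat_period hP0 0 i
  induction n with
  | zero => simp
  | succ n ih =>
      have : 2 * p * (n + 1) = 2 * p * n + 2 * p := by ring
      rw [this, win_add, ← ih, pow_succ]
      congr 1
      have e : (0 : ℤ) + ((2 * p * n : ℕ) : ℤ) = 0 + ((2 * p : ℕ) : ℤ) * n := by push_cast; ring
      rw [e, win_shift hper n 0 (2 * p)]
      exact uWord_eq_win t

lemma window_mem {q c : ℤ} (hc : 0 < c) (hco : IsCoprime q c) {cN : ℕ} (hcN : (cN : ℤ) = c)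
    {n : ℕ} {rel : FG} (hrel : win (pat q c 0) 0 (2 * cN * n) = rel)
    (g k : ℤ) : win (pat q c g) k (2 * cN * n) ∈ Subgroup.normalClosure {rel} := by
  set L : ℕ := 2 * cN * n with hL
  set N : Subgroup FG := Subgroup.normalClosure {rel} with hN
  have hNn : N.Normal := Subgroup.normalClosure_normal
  have hrelN : rel ∈ N := Subgroup.subset_normalClosure (Set.mem_singleton rel)
  have hperL : ∀ (g' : ℤ) (i : ℤ), pat q c g' (i + (L : ℕ)) = pat q c g' i := by
    intro g' i
    refine pat_period_mul hc.ne' ⟨n, ?_⟩ g' i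
    rw [hL]; push_cast [hcN]; ring
  have hbase : ∀ k' : ℤ, win (pat q c 0) k' L ∈ N := by
    intro k'
    obtain ⟨w, hw⟩ := win_conj (hperL 0) k'
    rw [hw, hrel]
    exact hNn.conj_mem rel hrelN w
  rcases Int.even_or_odd g with hpar | hpar
  · obtain ⟨G, hG⟩ := hpar
    obtain ⟨s, hs1, hs2⟩ := exists_shift hco G
    have hshift : ∀ i, pat q c g i = pat q c 0 (i + s) :=
      pat_shift_of_even hc hs1 (by rw [hG]; convert hs2 using 2; ring)
    have : win (pat q c g) k L = win (pat q c 0) (k + s) L :=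
      win_congr fun j hj => by rw [hshift (k + j)]; congr 1; ring
    rw [this]
    exact hbase _
  · obtain ⟨G, hG⟩ := hpar
    obtain ⟨s, hs1, hs2⟩ := exists_shift hco (-(G + 1))
    have hd : (2 * c) ∣ (s * q + g + 1) := by
      obtain ⟨w, hw⟩ := hs2
      exact ⟨w, by rw [hG]; linear_combination hw⟩
    have hshift : ∀ i, pat q c g i = (pat q c 0 (s - i))⁻¹ :=
      pat_shift_of_odd hc hs1 hd
    have : win (pat q c g) k L = (win (pat q c 0) (s - k - L + 1) L)⁻¹ :=
      win_inv fun j hj => by rw [hshift (k + j)]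
    rw [this]
    exact inv_mem (hbase _)

end Riley

end Heckoid

namespace Heckoid

/-- Riley's construction (even-index case): for coprime `α > β ≥ 1`,
`n ≥ 2`, `m = 2n`, `d ≥ 2` and `e = ±1`, setting `α* = α^d m` and
`β* = α^{d−1} m (α−β) + e`, one has `gcd(α*,β*) = 1`, `0 < β*/α* < 1`, and there is an
upper-meridian-pair-preserving epimorphism `G(K(β*/α*)) → H((α−β)/α; n)`. -/
theorem riley_epimorphism (α β : ℤ) (hβ : 1 ≤ β) (hαβ : β < α) (hcop : IsCoprime α β)
    (n : ℕ) (hn : 2 ≤ n) (d : ℕ) (hd : 2 ≤ d) (e : ℤ) (he : e = 1 ∨ e = -1) :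
    Int.gcd (α ^ d * (2 * n)) (α ^ (d - 1) * (2 * n) * (α - β) + e) = 1 ∧
    0 < ((α ^ (d - 1) * (2 * n) * (α - β) + e : ℤ) : ℚ) / ((α ^ d * (2 * n) : ℤ) : ℚ) ∧
    ((α ^ (d - 1) * (2 * n) * (α - β) + e : ℤ) : ℚ) / ((α ^ d * (2 * n) : ℤ) : ℚ) < 1 ∧
    ∃ φ : TwoBridgeGroup
          (((α ^ (d - 1) * (2 * n) * (α - β) + e : ℤ) : ℚ) / ((α ^ d * (2 * n) : ℤ) : ℚ)) →*
        HeckoidGroup (((α : ℚ) - β) / α) n,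
      IsUMPP (((α ^ (d - 1) * (2 * n) * (α - β) + e : ℤ) : ℚ) / ((α ^ d * (2 * n) : ℤ) : ℚ))
        (((α : ℚ) - β) / α) n φ := by
  have hα2 : 2 ≤ α := by omega
  have hα0 : 0 < α := by omega
  have hn0 : 0 < (n : ℤ) := by exact_mod_cast Nat.lt_of_lt_of_le Nat.zero_lt_two hn
  set M : ℤ := α ^ (d - 1) * (2 * (n : ℤ)) with hM
  set P : ℤ := α ^ d * (2 * (n : ℤ)) with hP
  set q : ℤ := M * (α - β) + e with hq
  set Q' : ℤ := α - β with hQ'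
  have hee : e * e = 1 := by rcases he with rfl | rfl <;> norm_num
  have he1 : -1 ≤ e ∧ e ≤ 1 := by rcases he with rfl | rfl <;> norm_num
  have hQ'1 : 1 ≤ Q' := by omega
  have hαd1 : α ^ (d - 1) = α ^ (d - 2) * α := by
    rw [← pow_succ]
    congr 1
    omega
  have hαd : α ^ d = α ^ (d - 1) * α := by
    rw [← pow_succ]
    congr 1
    omega
  have hPM : P = M * α := by rw [hP, hM, hαd]; ring
  have hαd2pos : 0 < α ^ (d - 2) := pow_pos hα0 _
  have hαd1pos : 0 < α ^ (d - 1) := pow_pos hα0 _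
  have hα_le : α ≤ α ^ (d - 1) := by
    calc α = α ^ 1 := (pow_one α).symm
    _ ≤ α ^ (d - 1) := pow_le_pow_right₀ (by omega) (by omega)
  have hM2 : 2 ≤ M := by nlinarith
  have hMpos : 0 < M := by omega
  have hPpos : 0 < P := by rw [hPM]; positivity
  have hq0 : 0 < q := by nlinarith
  have hqP : q < P := by
    rw [hPM]
    have h1 : M * α - q = M * β - e := by rw [hq]; ring
    nlinarith
  -- coprimality
  have hαq : IsCoprime α q := by
    refine ⟨-e * (α ^ (d - 2) * (2 * (n : ℤ)) * Q'), e, ?_⟩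
    rw [hq, hM, hαd1]
    linear_combination hee
  have hMq : IsCoprime M q := by
    refine ⟨-e * Q', e, ?_⟩
    rw [hq]
    linear_combination hee
  have hPq : IsCoprime P q := by rw [hPM]; exact hMq.mul_left hαq
  have hgcd : Int.gcd P q = 1 := Int.isCoprime_iff_gcd_eq_one.mp hPq
  refine ⟨hgcd, ?_, ?_, ?_⟩
  · apply div_pos <;> exact_mod_cast (by assumption)
  · rw [div_lt_one (by exact_mod_cast hPpos)]
    exact_mod_cast hqP
  -- rational number facts
  have hnatcopq : Nat.Coprime q.natAbs P.natAbs := by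
    have := Int.isCoprime_iff_gcd_eq_one.mp hPq.symm
    exact this
  set sQ : ℚ := ((q : ℚ) / (P : ℚ)) with hsQ
  have hsnum : sQ.num = q := Rat.num_div_eq_of_coprime hPpos hnatcopq
  have hsden : ((sQ.den : ℤ)) = P := Rat.den_div_eq_of_coprime hPpos hnatcopq
  have hαQ' : IsCoprime α Q' := by
    obtain ⟨u, v, huv⟩ := hcop
    exact ⟨u + v, -v, by rw [hQ']; linear_combination huv⟩
  have hQ'α : IsCoprime Q' α := hαQ'.symm
  have hrw : ((α : ℚ) - β) / α = ((Q' : ℚ) / (α : ℚ)) := by rw [hQ']; push_cast; ring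
  rw [hrw]
  set rQ : ℚ := ((Q' : ℚ) / (α : ℚ)) with hrQ
  have hnatcopr : Nat.Coprime Q'.natAbs α.natAbs :=
    Int.isCoprime_iff_gcd_eq_one.mp hQ'α
  have hrnum : rQ.num = Q' := Rat.num_div_eq_of_coprime hα0 hnatcopr
  have hrden : ((rQ.den : ℤ)) = α := Rat.den_div_eq_of_coprime hα0 hnatcopr
  set aN : ℕ := rQ.den with haN
  set pN : ℕ := sQ.den with hpN
  -- the relator as a window
  have hrel : Riley.win (Riley.pat Q' α 0) 0 (2 * aN * n) = uWord rQ ^ n := by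
    have h := Riley.uWord_pow_eq_win rQ n
    rw [hrnum, hrden] at h
    exact h.symm
  -- membership of the big relator
  set NC : Subgroup FG := Subgroup.normalClosure {uWord rQ ^ n} with hNC
  have hNCnormal : NC.Normal := Subgroup.normalClosure_normal
  set Fs : ℤ → FG := Riley.pat q P 0 with hFs
  have hus : uWord sQ = Riley.win Fs 0 (2 * pN) := by
    have h := Riley.uWord_eq_win sQ
    rw [hsnum, hsden] at h
    exact h
  set MN : ℕ := aN ^ (d - 1) * (2 * n) with hMN
  have hMNZ : ((MN : ℤ)) = M := by rw [hMN, hM]; push_cast [hrden]; ring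
  have hsplitN : 2 * pN = MN * (2 * aN) := by
    have h : ((2 * pN : ℕ) : ℤ) = ((MN * (2 * aN) : ℕ) : ℤ) := by
      push_cast [hsden, hMNZ, hrden]
      rw [hPM]; ring
    exact_mod_cast h
  have hMNpos : 0 < MN := by
    have : (0 : ℤ) < (MN : ℤ) := by rw [hMNZ]; exact hMpos
    exact_mod_cast this
  -- pointwise identification on runs
  have hpointwise : ∀ i gt : ℤ, (i * e) / M = gt → Fs i = Riley.pat Q' α gt i := by
    intro i gt hgt
    show Riley.pat q P 0 i = Riley.pat Q' α gt i
    unfold Riley.pat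
    congr 1
    rw [add_zero]
    have h1 : i * q = (i * e) + (i * Q') * M := by rw [hq, hQ']; ring
    have h2 : i * q / P = (i * q / M) / α := by
      rw [hPM, mul_comm M α, mul_comm α M]
      exact Riley.ediv_ediv hMpos hα0 _
    rw [h2, h1, Int.add_mul_ediv_right _ _ hMpos.ne', hgt]
    congr 1
    ring
  -- a run of length MN is in NC
  have hrun : ∀ (i0 gt : ℤ), (∀ x : ℕ, x < MN → ((i0 + x) * e) / M = gt) →
      Riley.win Fs i0 MN ∈ NC := by
    intro i0 gt h
    have h1 : Riley.win Fs i0 MN = Riley.win (Riley.pat Q' α gt) i0 MN :=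
      Riley.win_congr fun j hj => by rw [hpointwise _ _ (h j hj)]
    have hMN2 : MN = (2 * aN * n) * aN ^ (d - 2) := by
      have had : aN ^ (d - 1) = aN ^ (d - 2) * aN := by
        rw [← pow_succ]
        congr 1
        omega
      rw [hMN, had]; ring
    rw [h1, hMN2]
    exact Riley.win_split_mem fun u hu =>
      Riley.window_mem hα0 hQ'α hrden hrel gt _
  -- assembling block memberships
  have hmain : uWord sQ ∈ NC := by
    rcases he with rfl | rfl
    · -- e = 1, no offset
      rw [hus, hsplitN]
      apply Riley.win_split_mem
      intro t ht
      apply hrun _ (t : ℤ)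
      intro x hx
      have hxM : (x : ℤ) < M := by
        rw [← hMNZ]; exact_mod_cast hx
      have h1 : ((0 : ℤ) + ((MN * t : ℕ) : ℤ) + (x : ℤ)) * 1 = (x : ℤ) + (t : ℤ) * M := by
        push_cast [hMNZ]; ring
      rw [h1, Int.add_mul_ediv_right _ _ hMpos.ne',
        Riley.ediv_small (by positivity) hxM, zero_add]
    · -- e = -1, conjugate by ga
      have hFs0 : Fs 0 = ga := by
        show Riley.pat q P 0 0 = ga
        unfold Riley.pat
        norm_num [Riley.sg_zero, Riley.letZ]
      have hFs2p : Fs (0 + ((2 * pN : ℕ) : ℤ)) = ga := by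
        show Riley.pat q P 0 _ = ga
        unfold Riley.pat
        have he1 : (0 : ℤ) + ((2 * pN : ℕ) : ℤ) = 2 * P := by push_cast [hsden]; ring
        have he2 : (2 * P) * q + 0 = 0 + (2 * q) * P := by ring
        rw [he1, he2, Int.add_mul_ediv_right _ _ hPpos.ne',
          Riley.ediv_small le_rfl hPpos, zero_add, Riley.sg_even ⟨q, by ring⟩]
        have : Riley.letZ (2 * P) = Riley.letZ 0 := Riley.letZ_congr ⟨P, by ring⟩
        rw [this]
        norm_num [Riley.letZ]
      have hconj : uWord sQ = ga * Riley.win Fs 1 (2 * pN) * ga⁻¹ := by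
        have h1 : Riley.win Fs 0 (2 * pN + 1)
            = Riley.win Fs 0 (2 * pN) * Fs (0 + ((2 * pN : ℕ) : ℤ)) := Riley.win_succ ..
        have h2 : Riley.win Fs 0 (2 * pN + 1) = Fs 0 * Riley.win Fs (0 + 1) (2 * pN) :=
          Riley.win_succ' ..
        rw [hFs2p] at h1
        rw [hFs0, zero_add] at h2
        rw [hus]
        have h3 : Riley.win Fs 0 (2 * pN) = ga * Riley.win Fs 1 (2 * pN) * ga⁻¹ := by
          have := h1.symm.trans h2
          -- this : win 0 * ga = ga * win 1
          rw [← this]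
          group
        exact h3
      rw [hconj]
      apply hNCnormal.conj_mem
      rw [hsplitN]
      apply Riley.win_split_mem
      intro t ht
      apply hrun _ (-(t : ℤ) - 1)
      intro x hx
      have hxM : (x : ℤ) < M := by
        rw [← hMNZ]; exact_mod_cast hx
      have h1 : ((1 : ℤ) + ((MN * t : ℕ) : ℤ) + (x : ℤ)) * (-1)
          = (M - 1 - (x : ℤ)) + (-(t : ℤ) - 1) * M := by
        push_cast [hMNZ]; ring
      rw [h1, Int.add_mul_ediv_right _ _ hMpos.ne',
        Riley.ediv_small (by omega) (by omega), zero_add]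
  -- construct the homomorphism
  have hker : hMk rQ n (uWord sQ) = 1 := by
    show (QuotientGroup.mk (uWord sQ) : HeckoidGroup rQ n) = 1
    rw [QuotientGroup.eq_one_iff]
    exact hmain
  have hcond : ∀ w ∈ ({uWord sQ} : Set FG),
      FreeGroup.lift (fun i => hMk rQ n (FreeGroup.of i)) w = 1 := by
    rintro w rfl
    have hl : FreeGroup.lift (fun i => hMk rQ n (FreeGroup.of i)) (uWord sQ)
        = hMk rQ n (uWord sQ) :=
      (FreeGroup.lift_unique (hMk rQ n) (fun i => rfl)).symm
    rw [hl]
    exact hker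
  refine ⟨PresentedGroup.toGroup hcond, ?_, Or.inl ⟨?_, ?_⟩⟩
  · intro y
    obtain ⟨x, hx⟩ := PresentedGroup.mk_surjective _ y
    refine ⟨tMk sQ x, ?_⟩
    rw [← hx]
    exact (FreeGroup.lift_unique (hMk rQ n) (fun i => rfl) (x := x)).symm
  · have : (PresentedGroup.toGroup hcond) (tMk sQ ga) = hMk rQ n ga :=
      (FreeGroup.lift_unique (hMk rQ n) (fun i => rfl) (x := ga)).symm
    rw [this]
  · have : (PresentedGroup.toGroup hcond) (tMk sQ gb) = hMk rQ n gb :=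
      (FreeGroup.lift_unique (hMk rQ n) (fun i => rfl) (x := gb)).symm
    rw [this]

end Heckoid
end
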